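/- Let N ≥ 1, let 𝒳₁, …, 𝒳_N and 𝒴 be finite nonempty sets, let λ : Fin N → ℝ with λ i ≥ 0 and ∑ᵢ λ i = 1, for each i let d⁰ᵢ, d¹ᵢ : 𝒴 → ℝ be probability distributions on 𝒴, and for each i let qᵢ : 𝒳ᵢ → [0,1]. Define the multiple-access channel W(y | x₁,…,x_N) := ∑ᵢ λ i · ((1 − qᵢ(xᵢ)) · d⁰ᵢ(y) + qᵢ(xᵢ) · d¹ᵢ(y)). Then for every probability distribution P on 𝒳₁ × ⋯ × 𝒳_N, the mutual information (in bits) of the joint distribution Q(x⃗, y) := P(x⃗) · W(y | x⃗) satisfies I(Q) ≤ 1. -/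

import Mathlib

open Finset

/-- Pointwise inequality used in the proof of the log-sum inequality. -/
private lemma logsum_term (U V u v : ℝ) (hU : 0 < U) (hV : 0 < V)
    (hu : 0 ≤ u) (hv : 0 ≤ v) (huv : 0 < u → 0 < v) :
    u * Real.log (U / V) + u - v * (U / V) ≤ u * Real.log (u / v) := by
  rcases hu.eq_or_lt with h | h
  · have h0 : 0 ≤ v * (U / V) := mul_nonneg hv (le_of_lt (div_pos hU hV))
    simp only [← h, zero_mul, zero_add, zero_sub]
    linarith
  · have hv' := huv h
    have key := Real.log_le_sub_one_of_pos (show 0 < v * U / (u * V) by positivity)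
    have e : Real.log (v * U / (u * V)) = Real.log (U / V) - Real.log (u / v) := by
      rw [Real.log_div (by positivity) (by positivity), Real.log_mul hv'.ne' hU.ne',
        Real.log_mul h.ne' hV.ne', Real.log_div hU.ne' hV.ne', Real.log_div h.ne' hv'.ne']
      ring
    have h2 : u * (Real.log (U / V) - Real.log (u / v)) ≤ u * (v * U / (u * V) - 1) :=
      mul_le_mul_of_nonneg_left (by rw [← e]; exact key) h.le
    have h3 : u * (v * U / (u * V) - 1) = v * (U / V) - u := by
      field_simp
    rw [h3] at h2
    have h4 : v * (U / V) = v * U / V := (mul_div_assoc v U V).symm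
    nlinarith [h2]

/-- The log-sum inequality (natural logarithm). -/
private lemma log_sum_ineq {ι : Type*} [Fintype ι] (u v : ι → ℝ)
    (hu : ∀ k, 0 ≤ u k) (hv : ∀ k, 0 ≤ v k) (huv : ∀ k, 0 < u k → 0 < v k) :
    (∑ k, u k) * Real.log ((∑ k, u k) / (∑ k, v k)) ≤ ∑ k, u k * Real.log (u k / v k) := by
  have hU0 : 0 ≤ ∑ k, u k := Finset.sum_nonneg fun k _ => hu k
  rcases hU0.eq_or_lt with h | hU
  · have hz : ∀ k ∈ Finset.univ, u k = 0 := fun k hk =>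
      (Finset.sum_eq_zero_iff_of_nonneg (fun k _ => hu k)).mp h.symm k hk
    rw [Finset.sum_eq_zero hz, zero_mul]
    refine le_of_eq (Finset.sum_eq_zero fun k hk => ?_).symm
    rw [hz k hk, zero_mul]
  · have hV : 0 < ∑ k, v k := by
      obtain ⟨k, -, hk⟩ : ∃ k ∈ Finset.univ, 0 < u k := by
        by_contra hc
        push_neg at hc
        have : ∑ k, u k ≤ 0 := Finset.sum_nonpos fun k hk => hc k hk
        linarith
      exact lt_of_lt_of_le (huv k hk)
        (Finset.single_le_sum (fun k _ => hv k) (Finset.mem_univ k))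
    have key : ∀ k : ι,
        u k * Real.log ((∑ k, u k) / (∑ k, v k)) + u k - v k * ((∑ k, u k) / (∑ k, v k))
          ≤ u k * Real.log (u k / v k) :=
      fun k => logsum_term _ _ _ _ hU hV (hu k) (hv k) (huv k)
    have hsum : ∑ k, (u k * Real.log ((∑ k, u k) / (∑ k, v k)) + u k
        - v k * ((∑ k, u k) / (∑ k, v k)))
        = (∑ k, u k) * Real.log ((∑ k, u k) / (∑ k, v k)) + (∑ k, u k)
          - (∑ k, v k) * ((∑ k, u k) / (∑ k, v k)) := by
      rw [Finset.sum_sub_distrib, Finset.sum_add_distrib, ← Finset.sum_mul, ← Finset.sum_mul]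
    have hVU : (∑ k, v k) * ((∑ k, u k) / (∑ k, v k)) = ∑ k, u k := by
      field_simp
    calc (∑ k, u k) * Real.log ((∑ k, u k) / (∑ k, v k))
        = ∑ k, (u k * Real.log ((∑ k, u k) / (∑ k, v k)) + u k
            - v k * ((∑ k, u k) / (∑ k, v k))) := by rw [hsum, hVU]; ring
      _ ≤ ∑ k, u k * Real.log (u k / v k) := Finset.sum_le_sum fun k _ => key k

/-- Averaged binary relative entropy against the mean is at most `log 2`
(it equals the binary entropy of the mean minus the mean binary entropy). -/
private lemma binKL_sum_le {ι : Type*} [Fintype ι] (P f : ι → ℝ)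
    (hP0 : ∀ x, 0 ≤ P x) (hP1 : ∑ x, P x = 1)
    (hf0 : ∀ x, 0 ≤ f x) (hf1 : ∀ x, f x ≤ 1) :
    ∑ x, P x * (f x * Real.log (f x / (∑ x', P x' * f x')) +
      (1 - f x) * Real.log ((1 - f x) / (1 - ∑ x', P x' * f x'))) ≤ Real.log 2 := by
  set m : ℝ := ∑ x', P x' * f x' with hm_def
  have hm0 : 0 ≤ m := Finset.sum_nonneg fun x _ => mul_nonneg (hP0 x) (hf0 x)
  have hm1' : 1 - m = ∑ x', P x' * (1 - f x') := by
    rw [hm_def]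
    simp_rw [mul_sub, mul_one, Finset.sum_sub_distrib, hP1]
  have hm1 : m ≤ 1 := by
    have : 0 ≤ 1 - m := by
      rw [hm1']
      exact Finset.sum_nonneg fun x _ => mul_nonneg (hP0 x) (by linarith [hf1 x])
    linarith
  have key : ∀ x : ι, P x * (f x * Real.log (f x / m) +
      (1 - f x) * Real.log ((1 - f x) / (1 - m)))
      = P x * (f x * Real.log (f x) + (1 - f x) * Real.log (1 - f x))
        - (P x * f x) * Real.log m - (P x * (1 - f x)) * Real.log (1 - m) := by
    intro x
    rcases (hP0 x).eq_or_lt with hPx | hPx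
    · rw [← hPx]; ring
    · have e1 : f x * Real.log (f x / m) = f x * Real.log (f x) - f x * Real.log m := by
        rcases (hf0 x).eq_or_lt with hfx | hfx
        · rw [← hfx]; ring
        · have hm : 0 < m :=
            lt_of_lt_of_le (mul_pos hPx hfx)
              (Finset.single_le_sum (fun x' _ => mul_nonneg (hP0 x') (hf0 x'))
                (Finset.mem_univ x))
          rw [Real.log_div hfx.ne' hm.ne']
          ring
      have e2 : (1 - f x) * Real.log ((1 - f x) / (1 - m))
          = (1 - f x) * Real.log (1 - f x) - (1 - f x) * Real.log (1 - m) := by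
        rcases lt_or_eq_of_le (hf1 x) with hfx | hfx
        · have hfx' : 0 < 1 - f x := by linarith
          have hm : 0 < 1 - m := by
            rw [hm1']
            exact lt_of_lt_of_le (mul_pos hPx hfx')
              (Finset.single_le_sum (f := fun x' => P x' * (1 - f x'))
                (fun x' _ => mul_nonneg (hP0 x') (by linarith [hf1 x']))
                (Finset.mem_univ x))
          rw [Real.log_div hfx'.ne' hm.ne']
          ring
        · rw [hfx]; ring_nf
      rw [e1, e2]
      ring
  simp_rw [key]
  rw [Finset.sum_sub_distrib, Finset.sum_sub_distrib, ← Finset.sum_mul, ← Finset.sum_mul,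
    ← hm_def, ← hm1']
  have hent : ∀ x : ι, P x * (f x * Real.log (f x) + (1 - f x) * Real.log (1 - f x)) ≤ 0 := by
    intro x
    have hbe : 0 ≤ Real.binEntropy (f x) := Real.binEntropy_nonneg (hf0 x) (hf1 x)
    have : f x * Real.log (f x) + (1 - f x) * Real.log (1 - f x) = -Real.binEntropy (f x) := by
      rw [Real.binEntropy, Real.log_inv, Real.log_inv]
      ring
    rw [this]
    exact mul_nonpos_of_nonneg_of_nonpos (hP0 x) (by linarith)
  have h1 : ∑ x, P x * (f x * Real.log (f x) + (1 - f x) * Real.log (1 - f x)) ≤ 0 :=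
    Finset.sum_nonpos fun x _ => hent x
  have h2 : -(m * Real.log m) - (1 - m) * Real.log (1 - m) ≤ Real.log 2 := by
    have : -(m * Real.log m) - (1 - m) * Real.log (1 - m) = Real.binEntropy m := by
      rw [Real.binEntropy, Real.log_inv, Real.log_inv]
      ring
    rw [this]
    exact Real.binEntropy_le_log_two
  linarith

/-- Step B: data-processing / joint-convexity bound, KL of a mixture output
against the averaged output is at most the KL of the mixing weights. -/
private lemma mixture_KL_le {X Y Z : Type*} [Fintype X] [Fintype Y] [Fintype Z]
    (P : X → ℝ) (hP0 : ∀ x, 0 ≤ P x)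
    (a : X → Z → ℝ) (ha0 : ∀ x z, 0 ≤ a x z)
    (r : Z → Y → ℝ) (hr0 : ∀ z y, 0 ≤ r z y) (hr1 : ∀ z, ∑ y, r z y = 1)
    (x : X) (hx : 0 < P x) :
    ∑ y, (∑ z, a x z * r z y) *
        Real.log ((∑ z, a x z * r z y) / (∑ z, (∑ x', P x' * a x' z) * r z y))
      ≤ ∑ z, a x z * Real.log (a x z / (∑ x', P x' * a x' z)) := by
  set b : Z → ℝ := fun z => ∑ x', P x' * a x' z with hb_def
  have hb0 : ∀ z, 0 ≤ b z := fun z =>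
    Finset.sum_nonneg fun x' _ => mul_nonneg (hP0 x') (ha0 x' z)
  have hab : ∀ z, 0 < a x z → 0 < b z := by
    intro z hz
    exact lt_of_lt_of_le (mul_pos hx hz)
      (Finset.single_le_sum (fun x' _ => mul_nonneg (hP0 x') (ha0 x' z)) (Finset.mem_univ x))
  calc ∑ y, (∑ z, a x z * r z y) * Real.log ((∑ z, a x z * r z y) / (∑ z, b z * r z y))
      ≤ ∑ y, ∑ z, (a x z * r z y) * Real.log ((a x z * r z y) / (b z * r z y)) := by
        refine Finset.sum_le_sum fun y _ => ?_
        refine log_sum_ineq (fun z => a x z * r z y) (fun z => b z * r z y)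
          (fun z => mul_nonneg (ha0 x z) (hr0 z y))
          (fun z => mul_nonneg (hb0 z) (hr0 z y)) (fun z hz => ?_)
        have hz' : 0 < a x z * r z y := hz
        have haz : 0 < a x z := by
          rcases (ha0 x z).eq_or_lt with h | h
          · rw [← h, zero_mul] at hz'; exact absurd hz' (lt_irrefl 0)
          · exact h
        have hrz : 0 < r z y := by
          rcases (hr0 z y).eq_or_lt with h | h
          · rw [← h, mul_zero] at hz'; exact absurd hz' (lt_irrefl 0)
          · exact h
        exact mul_pos (hab z haz) hrz
    _ = ∑ z, a x z * Real.log (a x z / b z) := by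
        rw [Finset.sum_comm]
        refine Finset.sum_congr rfl fun z _ => ?_
        have e : ∀ y, (a x z * r z y) * Real.log ((a x z * r z y) / (b z * r z y))
            = (a x z * Real.log (a x z / b z)) * r z y := by
          intro y
          rcases (hr0 z y).eq_or_lt with h | h
          · rw [← h]; ring
          · rw [mul_div_mul_right _ _ h.ne']; ring
        simp_rw [e]
        rw [← Finset.mul_sum, hr1 z, mul_one]

/-- Every N-sender multiple-access channel built from a single classical particle
(a λ-mixture of channels factoring through a binary blocked/transmitted variable)
has mutual information (rate sum) at most 1 bit, for every product-independent prior `P`. -/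
theorem classical_particle_MAC_rate_sum_le_one
    {N : ℕ} (hN : 1 ≤ N)
    (𝒳 : Fin N → Type) [∀ i, Fintype (𝒳 i)] [∀ i, Nonempty (𝒳 i)]
    (𝒴 : Type) [Fintype 𝒴] [Nonempty 𝒴]
    (lam : Fin N → ℝ) (hlam0 : ∀ i, 0 ≤ lam i) (hlam1 : ∑ i, lam i = 1)
    (d0 d1 : Fin N → 𝒴 → ℝ)
    (hd00 : ∀ i y, 0 ≤ d0 i y) (hd0sum : ∀ i, ∑ y, d0 i y = 1)
    (hd10 : ∀ i y, 0 ≤ d1 i y) (hd1sum : ∀ i, ∑ y, d1 i y = 1)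
    (q : ∀ i, 𝒳 i → ℝ) (hq : ∀ i x, q i x ∈ Set.Icc (0 : ℝ) 1)
    (W : (∀ i, 𝒳 i) → 𝒴 → ℝ)
    (hW : ∀ x y, W x y = ∑ i, lam i * ((1 - q i (x i)) * d0 i y + q i (x i) * d1 i y))
    (P : (∀ i, 𝒳 i) → ℝ) (hP0 : ∀ x, 0 ≤ P x) (hP1 : ∑ x, P x = 1)
    (Q : (∀ i, 𝒳 i) → 𝒴 → ℝ) (hQ : ∀ x y, Q x y = P x * W x y) :
    ∑ x, ∑ y, Q x y * Real.logb 2 (Q x y / ((∑ y', Q x y') * (∑ x', Q x' y))) ≤ 1 := by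
  classical
  have hq0 : ∀ i xi, 0 ≤ q i xi := fun i xi => (hq i xi).1
  have hq1 : ∀ i xi, q i xi ≤ 1 := fun i xi => (hq i xi).2
  -- the hidden variable structure
  set a : (∀ i, 𝒳 i) → Fin N × Bool → ℝ :=
    fun x z => lam z.1 * (if z.2 then q z.1 (x z.1) else 1 - q z.1 (x z.1)) with ha_def
  set r : Fin N × Bool → 𝒴 → ℝ := fun z y => if z.2 then d1 z.1 y else d0 z.1 y with hr_def
  set qbar : Fin N → ℝ := fun i => ∑ x, P x * q i (x i) with hqbar_def
  have ha0 : ∀ x z, 0 ≤ a x z := by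
    intro x z
    rcases z with ⟨i, bb⟩
    cases bb <;> simp only [ha_def, if_true, if_false, Bool.false_eq_true] <;>
      exact mul_nonneg (hlam0 i) (by rcases hq i (x i) with ⟨h1, h2⟩; first | linarith | linarith)
  have hr0 : ∀ z y, 0 ≤ r z y := by
    intro z y
    rcases z with ⟨i, bb⟩
    cases bb <;> simp only [hr_def, if_true, if_false, Bool.false_eq_true]
    · exact hd00 i y
    · exact hd10 i y
  have hr1 : ∀ z, ∑ y, r z y = 1 := by
    intro z
    rcases z with ⟨i, bb⟩
    cases bb <;> simp only [hr_def, if_true, if_false, Bool.false_eq_true]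
    · exact hd0sum i
    · exact hd1sum i
  have hWz : ∀ x y, W x y = ∑ z : Fin N × Bool, a x z * r z y := by
    intro x y
    rw [hW, Fintype.sum_prod_type]
    refine Finset.sum_congr rfl fun i _ => ?_
    rw [Fintype.sum_bool]
    simp only [ha_def, hr_def, if_true, if_false, Bool.false_eq_true]
    ring
  have hW0 : ∀ x y, 0 ≤ W x y := by
    intro x y
    rw [hWz]
    exact Finset.sum_nonneg fun z _ => mul_nonneg (ha0 x z) (hr0 z y)
  have hWsum : ∀ x, ∑ y, W x y = 1 := by
    intro x
    simp_rw [hWz, Finset.sum_comm (γ := 𝒴)]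
    have e : ∀ z : Fin N × Bool, ∑ y, a x z * r z y = a x z := by
      intro z
      rw [← Finset.mul_sum, hr1 z, mul_one]
    simp_rw [e, ha_def, Fintype.sum_prod_type, Fintype.sum_bool]
    simp only [if_true, if_false, Bool.false_eq_true]
    have : ∀ i : Fin N, lam i * q i (x i) + lam i * (1 - q i (x i)) = lam i := fun i => by ring
    simp_rw [this, hlam1]
  have hb : ∀ z : Fin N × Bool, (∑ x', P x' * a x' z)
      = lam z.1 * (if z.2 then qbar z.1 else 1 - qbar z.1) := by
    intro z
    rcases z with ⟨i, bb⟩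
    cases bb <;> simp only [ha_def, hqbar_def, if_true, if_false, Bool.false_eq_true]
    · have e : ∀ x' : ∀ i, 𝒳 i, P x' * (lam i * (1 - q i (x' i)))
          = lam i * P x' - lam i * (P x' * q i (x' i)) := fun x' => by ring
      simp_rw [e, Finset.sum_sub_distrib, ← Finset.mul_sum, hP1]
      ring
    · have e : ∀ x' : ∀ i, 𝒳 i, P x' * (lam i * q i (x' i))
          = lam i * (P x' * q i (x' i)) := fun x' => by ring
      simp_rw [e, ← Finset.mul_sum]
  -- binary divergence expression
  set D : Fin N → (∀ i, 𝒳 i) → ℝ := fun i x =>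
    q i (x i) * Real.log (q i (x i) / qbar i) +
      (1 - q i (x i)) * Real.log ((1 - q i (x i)) / (1 - qbar i)) with hD_def
  -- Step C: the z-sum equals the weighted binary divergences
  have stepC : ∀ x, ∑ z : Fin N × Bool, a x z * Real.log (a x z / (∑ x', P x' * a x' z))
      = ∑ i, lam i * D i x := by
    intro x
    simp_rw [hb]
    rw [Fintype.sum_prod_type]
    refine Finset.sum_congr rfl fun i _ => ?_
    rw [Fintype.sum_bool]
    simp only [ha_def, hD_def, if_true, if_false, Bool.false_eq_true]
    rcases (hlam0 i).eq_or_lt with hl | hl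
    · rw [← hl]; ring
    · rw [mul_div_mul_left _ _ hl.ne', mul_div_mul_left _ _ hl.ne']
      ring
  -- the output marginal
  set QY : 𝒴 → ℝ := fun y => ∑ x', Q x' y with hQY_def
  have hQYz : ∀ y, QY y = ∑ z : Fin N × Bool, (∑ x', P x' * a x' z) * r z y := by
    intro y
    simp_rw [hQY_def, hQ, hWz, Finset.mul_sum, Finset.sum_comm (γ := ∀ i, 𝒳 i)]
    refine Finset.sum_congr rfl fun z _ => ?_
    rw [Finset.sum_mul]
    refine Finset.sum_congr rfl fun x' _ => ?_
    ring
  -- Step A + B + C combined, per sender x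
  have stepx : ∀ x, ∑ y, Q x y * Real.log (Q x y / ((∑ y', Q x y') * (∑ x', Q x' y)))
      ≤ P x * ∑ i, lam i * D i x := by
    intro x
    rcases (hP0 x).eq_or_lt with hPx | hPx
    · have hz : ∀ y, Q x y = 0 := fun y => by rw [hQ, ← hPx, zero_mul]
      have : ∑ y, Q x y * Real.log (Q x y / ((∑ y', Q x y') * (∑ x', Q x' y))) = 0 :=
        Finset.sum_eq_zero fun y _ => by rw [hz y, zero_mul]
      rw [this, ← hPx, zero_mul]
    · have hQx : (∑ y', Q x y') = P x := by
        simp_rw [hQ, ← Finset.mul_sum, hWsum x, mul_one]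
      have e : ∀ y, Q x y * Real.log (Q x y / ((∑ y', Q x y') * (∑ x', Q x' y)))
          = P x * (W x y * Real.log (W x y / QY y)) := by
        intro y
        rw [hQx, hQ, hQY_def, mul_div_mul_left _ _ hPx.ne']
        ring
      simp_rw [e, ← Finset.mul_sum]
      refine mul_le_mul_of_nonneg_left ?_ hPx.le
      calc ∑ y, W x y * Real.log (W x y / QY y)
          = ∑ y, (∑ z : Fin N × Bool, a x z * r z y) *
              Real.log ((∑ z : Fin N × Bool, a x z * r z y) /
                (∑ z : Fin N × Bool, (∑ x', P x' * a x' z) * r z y)) := by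
            refine Finset.sum_congr rfl fun y _ => ?_
            rw [← hWz, ← hQYz]
        _ ≤ ∑ z : Fin N × Bool, a x z * Real.log (a x z / (∑ x', P x' * a x' z)) :=
            mixture_KL_le P hP0 a ha0 r hr0 hr1 x hPx
        _ = ∑ i, lam i * D i x := stepC x
  -- Step D: sum over x and use the binary entropy bound
  have main : ∑ x, ∑ y, Q x y * Real.log (Q x y / ((∑ y', Q x y') * (∑ x', Q x' y)))
      ≤ Real.log 2 := by
    calc ∑ x, ∑ y, Q x y * Real.log (Q x y / ((∑ y', Q x y') * (∑ x', Q x' y)))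
        ≤ ∑ x, P x * ∑ i, lam i * D i x := Finset.sum_le_sum fun x _ => stepx x
      _ = ∑ i, lam i * ∑ x, P x * D i x := by
          simp_rw [Finset.mul_sum]
          rw [Finset.sum_comm]
          refine Finset.sum_congr rfl fun i _ => ?_
          refine Finset.sum_congr rfl fun x _ => ?_
          ring
      _ ≤ ∑ i, lam i * Real.log 2 := by
          refine Finset.sum_le_sum fun i _ => ?_
          refine mul_le_mul_of_nonneg_left ?_ (hlam0 i)
          have := binKL_sum_le P (fun x => q i (x i)) hP0 hP1
            (fun x => hq0 i (x i)) (fun x => hq1 i (x i))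
          simpa [hD_def, hqbar_def] using this
      _ = Real.log 2 := by rw [← Finset.sum_mul, hlam1, one_mul]
  have hlog2 : (0 : ℝ) < Real.log 2 := Real.log_pos one_lt_two
  have hconv : ∑ x, ∑ y, Q x y * Real.logb 2 (Q x y / ((∑ y', Q x y') * (∑ x', Q x' y)))
      = (∑ x, ∑ y, Q x y * Real.log (Q x y / ((∑ y', Q x y') * (∑ x', Q x' y)))) /
        Real.log 2 := by
    simp_rw [Real.logb, ← mul_div_assoc, Finset.sum_div]
  rw [hconv]
  rw [div_le_one hlog2]
  exact main
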